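/- For the Type (B.1) metric, the Ricci operator is (3q/(2a²))·Id plus a nilpotent part with the only non-zero off-diagonal entries Ric⁴₁ = (15/a³)x₂(bq−c²) and Ric⁴₂ = (15/(2a³))(bq−c²). Consequently the metric is Einstein if and only if c² − bq = 0, in which case the scalar curvature is τ = 6q/a². -/

import Mathlib

open Real Matrix

noncomputable section

abbrev Pt : Type := Fin 4 → ℝ
abbrev Mtx : Type := Matrix (Fin 4) (Fin 4) ℝ

/-- Partial derivative in the `i`-th coordinate direction. -/
def pd (i : Fin 4) (f : Pt → ℝ) (x : Pt) : ℝ :=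
  fderiv ℝ f x (Pi.single i 1)

/-- Inverse of the metric matrix. -/
def ginv (g : Pt → Mtx) (x : Pt) : Mtx := (g x)⁻¹

/-- Christoffel symbols Γ^k_{ij} of the Levi-Civita connection. -/
def chris (g : Pt → Mtx) (x : Pt) (k i j : Fin 4) : ℝ :=
  (1/2) * ∑ l, ginv g x k l *
    (pd i (fun y => g y l j) x + pd j (fun y => g y l i) x - pd l (fun y => g y i j) x)

/-- Component `l` of the curvature operator R(∂_i,∂_j)∂_k (convention
R(X,Y) = ∇_{[X,Y]} - [∇_X,∇_Y]). -/
def Rup (g : Pt → Mtx) (x : Pt) (l i j k : Fin 4) : ℝ :=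
  pd j (fun y => chris g y l i k) x - pd i (fun y => chris g y l j k) x
    + ∑ m, chris g x m i k * chris g x l j m
    - ∑ m, chris g x m j k * chris g x l i m

/-- The (0,4) curvature tensor R(∂_i,∂_j,∂_k,∂_l) = g(R(∂_i,∂_j)∂_k, ∂_l). -/
def Riem (g : Pt → Mtx) (x : Pt) (i j k l : Fin 4) : ℝ :=
  ∑ m, g x l m * Rup g x m i j k

/-- Ricci tensor ρ(X,Y) = trace (Z ↦ R(X,Z)Y). -/
def ricci (g : Pt → Mtx) (x : Pt) (i j : Fin 4) : ℝ :=
  ∑ k, Rup g x k i k j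

/-- Scalar curvature. -/
def scal (g : Pt → Mtx) (x : Pt) : ℝ :=
  ∑ i, ∑ j, ginv g x i j * ricci g x i j

/-- The Ricci operator g^{-1}ρ. -/
def RicOp (g : Pt → Mtx) (x : Pt) : Mtx :=
  Matrix.of fun i j => ∑ k, ginv g x i k * ricci g x k j

/-- Schouten tensor 𝔖 = ρ - (τ/6) g (dimension 4). -/
def schouten (g : Pt → Mtx) (x : Pt) (i j : Fin 4) : ℝ :=
  ricci g x i j - scal g x / 6 * g x i j

/-- Covariant derivative of the Schouten tensor, (∇_i 𝔖)_{jk}. -/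
def covSchouten (g : Pt → Mtx) (x : Pt) (i j k : Fin 4) : ℝ :=
  pd i (fun y => schouten g y j k) x
    - ∑ m, chris g x m i j * schouten g x m k
    - ∑ m, chris g x m i k * schouten g x j m

/-- Cotton tensor 𝔠_{ijk} = (∇_i 𝔖)_{jk} - (∇_j 𝔖)_{ik}. -/
def cotton (g : Pt → Mtx) (x : Pt) (i j k : Fin 4) : ℝ :=
  covSchouten g x i j k - covSchouten g x j i k

/-- Weyl conformal curvature tensor (dimension 4). -/
def weyl (g : Pt → Mtx) (x : Pt) (i j k l : Fin 4) : ℝ :=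
  Riem g x i j k l
    - (1/2) * (g x i k * ricci g x j l - g x i l * ricci g x j k
        + g x j l * ricci g x i k - g x j k * ricci g x i l)
    + scal g x / 6 * (g x i k * g x j l - g x i l * g x j k)

/-- Covariant derivative of the Cotton tensor, (∇_α 𝔠)_{kij}. -/
def covCotton (g : Pt → Mtx) (x : Pt) (α k i j : Fin 4) : ℝ :=
  pd α (fun y => cotton g y k i j) x
    - ∑ m, chris g x m α k * cotton g x m i j
    - ∑ m, chris g x m α i * cotton g x k m j
    - ∑ m, chris g x m α j * cotton g x k i m

/-- Bach tensor B_{ij} = (1/2){ g^{kα}(∇_α 𝔠)_{kij} + ρ^{kℓ} W_{ikjℓ} }. -/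
def bach (g : Pt → Mtx) (x : Pt) (i j : Fin 4) : ℝ :=
  (1/2) * ((∑ k, ∑ α, ginv g x k α * covCotton g x α k i j)
    + ∑ k, ∑ l, (∑ p, ∑ r, ginv g x k p * ginv g x l r * ricci g x p r) * weyl g x i k j l)

/-- Hessian of a function with respect to the Levi-Civita connection. -/
def hess (g : Pt → Mtx) (φ : Pt → ℝ) (x : Pt) (i j : Fin 4) : ℝ :=
  pd i (fun y => pd j φ y) x - ∑ m, chris g x m i j * pd m φ x

/-- Laplacian (metric trace of the Hessian). -/
def lap (g : Pt → Mtx) (φ : Pt → ℝ) (x : Pt) : ℝ :=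
  ∑ i, ∑ j, ginv g x i j * hess g φ x i j

/-- The conformal metric ḡ = φ^{-2} g. -/
def conf (φ : Pt → ℝ) (g : Pt → Mtx) : Pt → Mtx :=
  fun y => ((φ y)^2)⁻¹ • g y

/-- Einstein at a point: ρ = (τ/4) g. -/
def IsEinsteinAt (g : Pt → Mtx) (x : Pt) : Prop :=
  ∀ i j, ricci g x i j = scal g x / 4 * g x i j

/-- The conformally Einstein equation 2 Hes_φ + φ ρ = (1/4)(2Δφ + φτ) g. -/
def ConfEinsteinEq (g : Pt → Mtx) (φ : Pt → ℝ) : Prop :=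
  ∀ (x : Pt) (i j : Fin 4),
    2 * hess g φ x i j + φ x * ricci g x i j
      = (1/4) * (2 * lap g φ x + φ x * scal g x) * g x i j

/-- Jacobi operator J(v) = R(·,v)v as a matrix. -/
def jacobi (g : Pt → Mtx) (x : Pt) (v : Fin 4 → ℝ) : Mtx :=
  Matrix.of fun l i => ∑ j, ∑ k, v j * v k * Rup g x l i j k

/-- Type (A.1) metric. Coordinates: `x 0 = x₁, …, x 3 = x₄`. -/
def gA1 (a b c q : ℝ) : Pt → Mtx := fun x =>
  !![4*b*(x 1)^2 + a, 2*b*(x 1), -(4*a*(x 1)*(x 3) - 4*c*(x 1) + a)/2, 2*a*(x 1);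
     2*b*(x 1), b, -(a*(x 3) - c), a;
     -(4*a*(x 1)*(x 3) - 4*c*(x 1) + a)/2, -(a*(x 3) - c), q, 0;
     2*a*(x 1), a, 0, 0]

/-- Type (A.2) metric. -/
def gA2 (a b c q α : ℝ) : Pt → Mtx := fun x =>
  !![0, 0, -a * Real.exp (2*α*(x 3)), 0;
     0, a * Real.exp (2*α*(x 3)), 0, 0;
     -a * Real.exp (2*α*(x 3)), 0, b * Real.exp (2*(α-1)*(x 3)), c * Real.exp ((α-1)*(x 3));
     0, 0, c * Real.exp ((α-1)*(x 3)), q]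

/-- Type (A.3) metric `g₊`. -/
def gA3p (a b c q : ℝ) : Pt → Mtx := fun x =>
  !![0, 0, 0, a * Real.exp (2*(x 2));
     0, a * Real.exp (2*(x 2)) * Real.cos (x 3)^2, 0, 0;
     0, 0, b, c;
     a * Real.exp (2*(x 2)), 0, c, q]

/-- Type (A.3) metric `g₋`. -/
def gA3m (a b c q : ℝ) : Pt → Mtx := fun x =>
  !![0, 0, 0, a * Real.exp (2*(x 2));
     0, a * Real.exp (2*(x 2)) * Real.cosh (x 3)^2, 0, 0;
     0, 0, b, c;
     a * Real.exp (2*(x 2)), 0, c, q]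

/-- Type (A.4) metric. -/
def gA4 (a b : ℝ) : Pt → Mtx := fun x =>
  !![a/2*(x 3)^2 + 4*b*(x 1)^2 + a, 2*b*(x 1), a*(x 1)*(4 + (x 3)^2)/2, a*(1 + 2*(x 1)*(x 2))*(x 3)/2;
     2*b*(x 1), b, a*(4 + (x 3)^2)/4, a*(x 2)*(x 3)/2;
     a*(x 1)*(4 + (x 3)^2)/2, a*(4 + (x 3)^2)/4, 0, 0;
     a*(1 + 2*(x 1)*(x 2))*(x 3)/2, a*(x 2)*(x 3)/2, 0, a/2]

/-- Type (A.5) metric. -/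
def gA5 (a : ℝ) : Pt → Mtx := fun x =>
  !![0, -a*(x 3)/(8*(x 1)), 0, a/8;
     -a*(x 3)/(8*(x 1)), a*(2 + 2*(x 0)*(x 3) + (x 2)^2)/(8*(x 1)^2), -a*(x 2)/(8*(x 1)), -a*(x 0)/(8*(x 1));
     0, -a*(x 2)/(8*(x 1)), a/8, 0;
     a/8, -a*(x 0)/(8*(x 1)), 0, 0]

/-- Type (B.1) metric. -/
def gB1 (a b c q : ℝ) : Pt → Mtx := fun x =>
  !![q*((x 2)^2 + 4*(x 1)*(x 2)*(x 3) + 4*(x 1)^2*(x 3)^2) + 4*c*(x 1)*(x 2) + 8*c*(x 1)^2*(x 3) + 2*a*(x 2) + 4*b*(x 1)^2,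
       q*((x 2)*(x 3) + 2*(x 1)*(x 3)^2) + 4*c*(x 1)*(x 3) + c*(x 2) + 2*b*(x 1),
       q*((x 2) + 2*(x 1)*(x 3)) + 2*c*(x 1) + a, 2*a*(x 1);
     q*((x 2)*(x 3) + 2*(x 1)*(x 3)^2) + 4*c*(x 1)*(x 3) + c*(x 2) + 2*b*(x 1),
       q*(x 3)^2 + 2*c*(x 3) + b, q*(x 3) + c, a;
     q*((x 2) + 2*(x 1)*(x 3)) + 2*c*(x 1) + a, q*(x 3) + c, q, 0;
     2*a*(x 1), a, 0, 0]

/-- Type (B.3) metric. -/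
def gB3 (a b : ℝ) : Pt → Mtx := fun x =>
  !![0, -a * Real.exp (-(x 1)) * (x 2), a * Real.exp (-(x 1)), 0;
     -a * Real.exp (-(x 1)) * (x 2), 2*(2*b*(x 2)^2 - a*(x 3)), -2*b*(x 2), a;
     a * Real.exp (-(x 1)), -2*b*(x 2), b, 0;
     0, a, 0, 0]

theorem pd_const (i : Fin 4) (c : ℝ) (x : Pt) : pd i (fun _ => c) x = 0 := by
  simp [pd]
theorem pd_coord (i j : Fin 4) (x : Pt) : pd i (fun y => y j) x = if i = j then 1 else 0 := by
  have : (fun y : Pt => y j) = fun y => ContinuousLinearMap.proj (R := ℝ) (φ := fun _ : Fin 4 => ℝ) j y := rfl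
  rw [pd, this, ContinuousLinearMap.fderiv]
  simp [Pi.single_apply, eq_comm]
theorem pd_add (i : Fin 4) (f g : Pt → ℝ) (x : Pt) (hf : DifferentiableAt ℝ f x)
    (hg : DifferentiableAt ℝ g x) : pd i (fun y => f y + g y) x = pd i f x + pd i g x := by
  simp [pd, fderiv_fun_add hf hg]
theorem pd_sub (i : Fin 4) (f g : Pt → ℝ) (x : Pt) (hf : DifferentiableAt ℝ f x)
    (hg : DifferentiableAt ℝ g x) : pd i (fun y => f y - g y) x = pd i f x - pd i g x := by
  simp [pd, fderiv_fun_sub hf hg]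
theorem pd_neg (i : Fin 4) (f : Pt → ℝ) (x : Pt) : pd i (fun y => -f y) x = -pd i f x := by
  simp [pd, fderiv_neg]
theorem pd_mul (i : Fin 4) (f g : Pt → ℝ) (x : Pt) (hf : DifferentiableAt ℝ f x)
    (hg : DifferentiableAt ℝ g x) :
    pd i (fun y => f y * g y) x = pd i f x * g x + f x * pd i g x := by
  simp [pd, fderiv_fun_mul hf hg]; ring
theorem pd_div_const (i : Fin 4) (f : Pt → ℝ) (c : ℝ) (x : Pt) (hf : DifferentiableAt ℝ f x) :
    pd i (fun y => f y / c) x = pd i f x / c := by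
  simp [pd, div_eq_mul_inv, fderiv_mul_const hf]; ring
theorem pd_sq (i : Fin 4) (f : Pt → ℝ) (x : Pt) (hf : DifferentiableAt ℝ f x) :
    pd i (fun y => f y ^ 2) x = 2 * f x * pd i f x := by
  have : (fun y => f y ^ 2) = fun y => f y * f y := by ext y; ring
  rw [this, pd_mul i f f x hf hf]; ring
theorem pd_cube (i : Fin 4) (f : Pt → ℝ) (x : Pt) (hf : DifferentiableAt ℝ f x) :
    pd i (fun y => f y ^ 3) x = 3 * f x ^ 2 * pd i f x := by
  have : (fun y => f y ^ 3) = fun y => f y * (f y * f y) := by ext y; ring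
  rw [this, pd_mul i f _ x hf (hf.fun_mul hf), pd_mul i f f x hf hf]; ring


def GB1inv (a b c q : ℝ) (x : Pt) : Mtx :=
  !![((-1)*q)/a^2, (2*(x 1)*q)/a^2, (a + (x 2)*q)/a^2, ((-1)*c + (-1)*(x 3)*q)/a^2;
    (2*(x 1)*q)/a^2, ((-4)*(x 1)^2*q)/a^2, ((-2)*(x 1)*a + (-2)*(x 1)*(x 2)*q)/a^2, (a + 2*(x 1)*c + 2*(x 1)*(x 3)*q)/a^2;
    (a + (x 2)*q)/a^2, ((-2)*(x 1)*a + (-2)*(x 1)*(x 2)*q)/a^2, ((-2)*(x 2)*a + (-1)*(x 2)^2*q)/a^2, ((x 2)*c + (x 2)*(x 3)*q)/a^2;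
    ((-1)*c + (-1)*(x 3)*q)/a^2, (a + 2*(x 1)*c + 2*(x 1)*(x 3)*q)/a^2, ((x 2)*c + (x 2)*(x 3)*q)/a^2, ((-1)*b + (-2)*(x 3)*c + (-1)*(x 3)^2*q)/a^2]

def GammaB1_0 (a b c q : ℝ) (x : Pt) : Mtx :=
  !![((-1)*a^2 + (-2)*(x 2)*a*q + (-1)*(x 2)^2*q^2 + (-2)*(x 1)*a*c + (-2)*(x 1)*(x 3)*a*q + (-4)*(x 1)*(x 2)*c*q + (-4)*(x 1)*(x 2)*(x 3)*q^2 + 4*(x 1)^2*c^2 + (-8)*(x 1)^2*b*q + (-8)*(x 1)^2*(x 3)*c*q + (-4)*(x 1)^2*(x 3)^2*q^2)/a^2, ((-1/2)*a*c + (-1/2)*(x 3)*a*q + (-1)*(x 2)*c*q + (-1)*(x 2)*(x 3)*q^2 + 2*(x 1)*c^2 + (-4)*(x 1)*b*q + (-4)*(x 1)*(x 3)*c*q + (-2)*(x 1)*(x 3)^2*q^2)/a^2, ((-1)*a*q + (-1)*(x 2)*q^2 + (-2)*(x 1)*c*q + (-2)*(x 1)*(x 3)*q^2)/a^2, ((-1)*(x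 1)*q)/a^1;
    ((-1/2)*a*c + (-1/2)*(x 3)*a*q + (-1)*(x 2)*c*q + (-1)*(x 2)*(x 3)*q^2 + 2*(x 1)*c^2 + (-4)*(x 1)*b*q + (-4)*(x 1)*(x 3)*c*q + (-2)*(x 1)*(x 3)^2*q^2)/a^2, (c^2 + (-2)*b*q + (-2)*(x 3)*c*q + (-1)*(x 3)^2*q^2)/a^2, ((-1)*c*q + (-1)*(x 3)*q^2)/a^2, ((-1/2)*q)/a^1;
    ((-1)*a*q + (-1)*(x 2)*q^2 + (-2)*(x 1)*c*q + (-2)*(x 1)*(x 3)*q^2)/a^2, ((-1)*c*q + (-1)*(x 3)*q^2)/a^2, ((-1)*q^2)/a^2, 0;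
    ((-1)*(x 1)*q)/a^1, ((-1/2)*q)/a^1, 0, 0]

def GammaB1_1 (a b c q : ℝ) (x : Pt) : Mtx :=
  !![(2*(x 1)*a^2 + 2*(x 1)*(x 2)*a*q + 2*(x 1)*(x 2)^2*q^2 + 8*(x 1)^2*(x 2)*c*q + 8*(x 1)^2*(x 2)*(x 3)*q^2 + (-8)*(x 1)^3*c^2 + 16*(x 1)^3*b*q + 16*(x 1)^3*(x 3)*c*q + 8*(x 1)^3*(x 3)^2*q^2)/a^2, (a^2 + (-1/2)*(x 2)*a*q + (-1)*(x 1)*a*c + (-1)*(x 1)*(x 3)*a*q + 2*(x 1)*(x 2)*c*q + 2*(x 1)*(x 2)*(x 3)*q^2 + (-4)*(x 1)^2*c^2 + 8*(x 1)^2*b*q + 8*(x 1)^2*(x 3)*c*q + 4*(x 1)^2*(x 3)^2*q^2)/a^2, ((x 1)*a*q + 2*(x 1)*(x 2)*q^2 + 4*(x 1)^2*c*q + 4*(x 1)^2*(x 3)*q^2)/a^2, (2*(x 1)^2*q)/a^1;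
    (a^2 + (-1/2)*(x 2)*a*q + (-1)*(x 1)*a*c + (-1)*(x 1)*(x 3)*a*q + 2*(x 1)*(x 2)*c*q + 2*(x 1)*(x 2)*(x 3)*q^2 + (-4)*(x 1)^2*c^2 + 8*(x 1)^2*b*q + 8*(x 1)^2*(x 3)*c*q + 4*(x 1)^2*(x 3)^2*q^2)/a^2, ((-1)*a*c + (-1)*(x 3)*a*q + (-2)*(x 1)*c^2 + 4*(x 1)*b*q + 4*(x 1)*(x 3)*c*q + 2*(x 1)*(x 3)^2*q^2)/a^2, ((-1/2)*a*q + 2*(x 1)*c*q + 2*(x 1)*(x 3)*q^2)/a^2, ((x 1)*q)/a^1;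
    ((x 1)*a*q + 2*(x 1)*(x 2)*q^2 + 4*(x 1)^2*c*q + 4*(x 1)^2*(x 3)*q^2)/a^2, ((-1/2)*a*q + 2*(x 1)*c*q + 2*(x 1)*(x 3)*q^2)/a^2, (2*(x 1)*q^2)/a^2, 0;
    (2*(x 1)^2*q)/a^1, ((x 1)*q)/a^1, 0, 0]

def GammaB1_2 (a b c q : ℝ) (x : Pt) : Mtx :=
  !![(2*(x 2)*a^2 + 3*(x 2)^2*a*q + (x 2)^3*q^2 + 8*(x 1)*(x 2)*a*c + 8*(x 1)*(x 2)*(x 3)*a*q + 4*(x 1)*(x 2)^2*c*q + 4*(x 1)*(x 2)^2*(x 3)*q^2 + 8*(x 1)^2*a*b + 16*(x 1)^2*(x 3)*a*c + 8*(x 1)^2*(x 3)^2*a*q + (-4)*(x 1)^2*(x 2)*c^2 + 8*(x 1)^2*(x 2)*b*q + 8*(x 1)^2*(x 2)*(x 3)*c*q + 4*(x 1)^2*(x 2)*(x 3)^2*q^2)/a^2, (2*(x 2)*a*c + 2*(x 2)*(x 3)*a*q + (x 2)^2*c*q + (x 2)^2*(x 3)*q^2 + 4*(x 1)*a*b + 8*(x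 1)*(x 3)*a*c + 4*(x 1)*(x 3)^2*a*q + (-2)*(x 1)*(x 2)*c^2 + 4*(x 1)*(x 2)*b*q + 4*(x 1)*(x 2)*(x 3)*c*q + 2*(x 1)*(x 2)*(x 3)^2*q^2)/a^2, (a^2 + 2*(x 2)*a*q + (x 2)^2*q^2 + 3*(x 1)*a*c + 3*(x 1)*(x 3)*a*q + 2*(x 1)*(x 2)*c*q + 2*(x 1)*(x 2)*(x 3)*q^2)/a^2, (2*(x 1)*a + (x 1)*(x 2)*q)/a^1;
    (2*(x 2)*a*c + 2*(x 2)*(x 3)*a*q + (x 2)^2*c*q + (x 2)^2*(x 3)*q^2 + 4*(x 1)*a*b + 8*(x 1)*(x 3)*a*c + 4*(x 1)*(x 3)^2*a*q + (-2)*(x 1)*(x 2)*c^2 + 4*(x 1)*(x 2)*b*q + 4*(x 1)*(x 2)*(x 3)*c*q + 2*(x 1)*(x 2)*(x 3)^2*q^2)/a^2, (2*a*b + 4*(x 3)*a*c + 2*(x 3)^2*a*q + (-1)*(x 2)*c^2 + 2*(x 2)*b*q + 2*(x 2)*(x 3)*c*q + (x 2)*(x 3)^2*q^2)/a^2, ((3/2)*a*c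 + (3/2)*(x 3)*a*q + (x 2)*c*q + (x 2)*(x 3)*q^2)/a^2, (a + (1/2)*(x 2)*q)/a^1;
    (a^2 + 2*(x 2)*a*q + (x 2)^2*q^2 + 3*(x 1)*a*c + 3*(x 1)*(x 3)*a*q + 2*(x 1)*(x 2)*c*q + 2*(x 1)*(x 2)*(x 3)*q^2)/a^2, ((3/2)*a*c + (3/2)*(x 3)*a*q + (x 2)*c*q + (x 2)*(x 3)*q^2)/a^2, (a*q + (x 2)*q^2)/a^2, 0;
    (2*(x 1)*a + (x 1)*(x 2)*q)/a^1, (a + (1/2)*(x 2)*q)/a^1, 0, 0]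

def GammaB1_3 (a b c q : ℝ) (x : Pt) : Mtx :=
  !![((-3)*(x 2)*a*c + (-3)*(x 2)*(x 3)*a*q + (-1)*(x 2)^2*c*q + (-1)*(x 2)^2*(x 3)*q^2 + (-4)*(x 1)*a*b + (-8)*(x 1)*(x 3)*a*c + (-4)*(x 1)*(x 3)^2*a*q + (-6)*(x 1)*(x 2)*c^2 + 2*(x 1)*(x 2)*b*q + (-8)*(x 1)*(x 2)*(x 3)*c*q + (-4)*(x 1)*(x 2)*(x 3)^2*q^2 + (-4)*(x 1)^2*b*c + (-8)*(x 1)^2*(x 3)*c^2 + (-4)*(x 1)^2*(x 3)*b*q + (-12)*(x 1)^2*(x 3)^2*c*q + (-4)*(x 1)^2*(x 3)^3*q^2)/a^2, ((-1)*a*b + (-2)*(x 3)*a*c + (-1)*(x 3)^2*a*q + (-3/2)*(x 2)*c^2 + (1/2)*(x 2)*b*q + (-2)*(x 2)*(x 3)*c*q + (-1)*(x 2)*(x 3)^2*q^2 + (-2)*(x 1)*b*c + (-4)*(x 1)*(x 3)*c^2 + (-2)*(x 1)*(x 3)*b*q + (-6)*(x 1)*(x 3)^2*c*q + (-2)*(x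 1)*(x 3)^3*q^2)/a^2, ((-3/2)*a*c + (-3/2)*(x 3)*a*q + (-1)*(x 2)*c*q + (-1)*(x 2)*(x 3)*q^2 + (-3)*(x 1)*c^2 + (x 1)*b*q + (-4)*(x 1)*(x 3)*c*q + (-2)*(x 1)*(x 3)^2*q^2)/a^2, ((-1)*a + (1/2)*(x 2)*q)/a^1;
    ((-1)*a*b + (-2)*(x 3)*a*c + (-1)*(x 3)^2*a*q + (-3/2)*(x 2)*c^2 + (1/2)*(x 2)*b*q + (-2)*(x 2)*(x 3)*c*q + (-1)*(x 2)*(x 3)^2*q^2 + (-2)*(x 1)*b*c + (-4)*(x 1)*(x 3)*c^2 + (-2)*(x 1)*(x 3)*b*q + (-6)*(x 1)*(x 3)^2*c*q + (-2)*(x 1)*(x 3)^3*q^2)/a^2, ((-1)*b*c + (-2)*(x 3)*c^2 + (-1)*(x 3)*b*q + (-3)*(x 3)^2*c*q + (-1)*(x 3)^3*q^2)/a^2, ((-3/2)*c^2 + (1/2)*b*q + (-2)*(x 3)*c*q + (-1)*(x 3)^2*q^2)/a^2, 0;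
    ((-3/2)*a*c + (-3/2)*(x 3)*a*q + (-1)*(x 2)*c*q + (-1)*(x 2)*(x 3)*q^2 + (-3)*(x 1)*c^2 + (x 1)*b*q + (-4)*(x 1)*(x 3)*c*q + (-2)*(x 1)*(x 3)^2*q^2)/a^2, ((-3/2)*c^2 + (1/2)*b*q + (-2)*(x 3)*c*q + (-1)*(x 3)^2*q^2)/a^2, ((-1)*c*q + (-1)*(x 3)*q^2)/a^2, ((1/2)*q)/a^1;
    ((-1)*a + (1/2)*(x 2)*q)/a^1, 0, ((1/2)*q)/a^1, 0]

def GammaB1 (a b c q : ℝ) (x : Pt) : Fin 4 → Mtx :=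
  ![GammaB1_0 a b c q x, GammaB1_1 a b c q x, GammaB1_2 a b c q x, GammaB1_3 a b c q x]

def ricB1 (a b c q : ℝ) (x : Pt) : Mtx :=
  !![(3*(x 2)*a*q + (3/2)*(x 2)^2*q^2 + 6*(x 1)*(x 2)*c*q + 6*(x 1)*(x 2)*(x 3)*q^2 + (-30)*(x 1)^2*c^2 + 36*(x 1)^2*b*q + 12*(x 1)^2*(x 3)*c*q + 6*(x 1)^2*(x 3)^2*q^2)/a^2, ((3/2)*(x 2)*c*q + (3/2)*(x 2)*(x 3)*q^2 + (-15)*(x 1)*c^2 + 18*(x 1)*b*q + 6*(x 1)*(x 3)*c*q + 3*(x 1)*(x 3)^2*q^2)/a^2, ((3/2)*a*q + (3/2)*(x 2)*q^2 + 3*(x 1)*c*q + 3*(x 1)*(x 3)*q^2)/a^2, (3*(x 1)*q)/a^1;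
    ((3/2)*(x 2)*c*q + (3/2)*(x 2)*(x 3)*q^2 + (-15)*(x 1)*c^2 + 18*(x 1)*b*q + 6*(x 1)*(x 3)*c*q + 3*(x 1)*(x 3)^2*q^2)/a^2, ((-15/2)*c^2 + 9*b*q + 3*(x 3)*c*q + (3/2)*(x 3)^2*q^2)/a^2, ((3/2)*c*q + (3/2)*(x 3)*q^2)/a^2, ((3/2)*q)/a^1;
    ((3/2)*a*q + (3/2)*(x 2)*q^2 + 3*(x 1)*c*q + 3*(x 1)*(x 3)*q^2)/a^2, ((3/2)*c*q + (3/2)*(x 3)*q^2)/a^2, ((3/2)*q^2)/a^2, 0;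
    (3*(x 1)*q)/a^1, ((3/2)*q)/a^1, 0, 0]



set_option maxHeartbeats 4000000 in
theorem gB1_inv (a b c q : ℝ) (h : a ≠ 0) (x : Pt) :
    ginv (gB1 a b c q) x = GB1inv a b c q x := by
  rw [ginv]
  apply Matrix.inv_eq_right_inv
  ext i j
  fin_cases i <;> fin_cases j <;>
    (simp [gB1, GB1inv, Matrix.mul_apply, Fin.sum_univ_four, Matrix.one_apply]; field_simp; ring)

def dgB1 (a b c q : ℝ) (x : Pt) : Fin 4 → Mtx :=
  ![0,
    !![q*(4*(x 2)*(x 3) + 8*(x 1)*(x 3)^2) + 4*c*(x 2) + 16*c*(x 1)*(x 3) + 8*b*(x 1), 2*q*(x 3)^2 + 4*c*(x 3) + 2*b, 2*q*(x 3) + 2*c, 2*a;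
       2*q*(x 3)^2 + 4*c*(x 3) + 2*b, 0, 0, 0;
       2*q*(x 3) + 2*c, 0, 0, 0;
       2*a, 0, 0, 0],
    !![q*(2*(x 2) + 4*(x 1)*(x 3)) + 4*c*(x 1) + 2*a, q*(x 3) + c, q, 0;
       q*(x 3) + c, 0, 0, 0;
       q, 0, 0, 0;
       0, 0, 0, 0],
    !![q*(4*(x 1)*(x 2) + 8*(x 1)^2*(x 3)) + 8*c*(x 1)^2, q*((x 2) + 4*(x 1)*(x 3)) + 4*c*(x 1), 2*q*(x 1), 0;
       q*((x 2) + 4*(x 1)*(x 3)) + 4*c*(x 1), 2*q*(x 3) + 2*c, q, 0;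
       2*q*(x 1), q, 0, 0;
       0, 0, 0, 0]]

theorem pd_gB1 (a b c q : ℝ) (x : Pt) (i l j : Fin 4) :
    pd i (fun y => gB1 a b c q y l j) x = dgB1 a b c q x i l j := by
  fin_cases i <;> fin_cases l <;> fin_cases j <;>
    simp (disch := fun_prop) only [gB1, dgB1, Matrix.cons_val', Matrix.cons_val_zero, Matrix.cons_val_one,
      Matrix.head_cons, Matrix.head_fin_const, Matrix.cons_val_fin_one, Matrix.of_apply, Matrix.empty_val',
      Matrix.cons_val_two, Matrix.cons_val_three, Matrix.tail_cons, Matrix.zero_apply, Pi.zero_apply,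
      Fin.zero_eta, Fin.mk_one, Fin.reduceFinMk, Fin.isValue, pd_add, pd_sub, pd_neg, pd_mul, pd_sq,
      pd_const, pd_coord, Fin.reduceEq, reduceIte, if_true, if_false] <;> ring

set_option maxHeartbeats 16000000 in
theorem chrisB1 (a b c q : ℝ) (h : a ≠ 0) (y : Pt) (k i j : Fin 4) :
    chris (gB1 a b c q) y k i j = GammaB1 a b c q y k i j := by
  fin_cases k <;> fin_cases i <;> fin_cases j <;>
  · simp only [Fin.zero_eta, Fin.mk_one, Fin.reduceFinMk, Fin.isValue]
    simp only [chris, Fin.sum_univ_four, gB1_inv a b c q h, pd_gB1]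
    simp only [gB1, dgB1, GB1inv, GammaB1, GammaB1_0, GammaB1_1, GammaB1_2, GammaB1_3, Matrix.cons_val', Matrix.cons_val_zero,
      Matrix.cons_val_one, Matrix.head_cons, Matrix.head_fin_const, Matrix.cons_val_fin_one,
      Matrix.of_apply, Matrix.empty_val', Matrix.cons_val_two, Matrix.cons_val_three, Matrix.tail_cons, Matrix.zero_apply]
    ring_nf
    try field_simp
    try ring

set_option maxHeartbeats 16000000 in
theorem ricciB1 (a b c q : ℝ) (h : a ≠ 0) (x : Pt) (i j : Fin 4) :
    ricci (gB1 a b c q) x i j = ricB1 a b c q x i j := by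
  fin_cases i <;> fin_cases j <;>
  · simp only [Fin.zero_eta, Fin.mk_one, Fin.reduceFinMk, Fin.isValue]
    simp only [ricci, Rup, Fin.sum_univ_four]
    simp only [chrisB1 a b c q h]
    simp only [GammaB1, GammaB1_0, GammaB1_1, GammaB1_2, GammaB1_3, ricB1, Matrix.cons_val', Matrix.cons_val_zero,
      Matrix.cons_val_one, Matrix.head_cons, Matrix.head_fin_const, Matrix.cons_val_fin_one,
      Matrix.of_apply, Matrix.empty_val', Matrix.cons_val_two, Matrix.cons_val_three, Matrix.tail_cons]
    simp (disch := fun_prop) only [pd_add, pd_sub, pd_neg, pd_mul, pd_div_const, pd_sq, pd_cube,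
      pd_const, pd_coord]
    simp only [Fin.reduceEq, if_false, if_true, reduceIte, Fin.isValue]
    ring_nf
    try field_simp
    try ring

set_option maxHeartbeats 4000000 in
theorem scalB1 (a b c q : ℝ) (h : a ≠ 0) (x : Pt) :
    scal (gB1 a b c q) x = 6*q/a^2 := by
  simp only [scal, Fin.sum_univ_four, gB1_inv a b c q h, ricciB1 a b c q h]
  simp only [GB1inv, ricB1, Matrix.cons_val', Matrix.cons_val_zero,
      Matrix.cons_val_one, Matrix.head_cons, Matrix.head_fin_const, Matrix.cons_val_fin_one,
      Matrix.of_apply, Matrix.empty_val', Matrix.cons_val_two, Matrix.cons_val_three, Matrix.tail_cons]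
  field_simp
  ring

set_option maxHeartbeats 4000000 in
/-- Ricci operator of the Type (B.1) metric; Einstein iff
c² − bq = 0, in which case the scalar curvature is 6q/a². -/
theorem typeB1_ricciOp (a b c q : ℝ) (h : a ≠ 0) :
    (∀ x : Pt, RicOp (gB1 a b c q) x =
      (3*q/(2*a^2)) • (1 : Mtx)
        + Matrix.single 3 0 (15/a^3 * (x 1) * (b*q - c^2))
        + Matrix.single 3 1 (15/(2*a^3) * (b*q - c^2))) ∧
    ((∀ x : Pt, IsEinsteinAt (gB1 a b c q) x) ↔ c^2 - b*q = 0) ∧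
    (c^2 - b*q = 0 → ∀ x : Pt, scal (gB1 a b c q) x = 6*q/a^2) := by
  refine ⟨?_, ⟨?_, ?_⟩, ?_⟩
  · intro x
    ext i j
    fin_cases i <;> fin_cases j <;>
    · simp only [Fin.zero_eta, Fin.mk_one, Fin.reduceFinMk, Fin.isValue]
      simp only [RicOp, Matrix.of_apply, Fin.sum_univ_four, gB1_inv a b c q h,
        ricciB1 a b c q h, Matrix.add_apply, Matrix.smul_apply, Matrix.one_apply,
        Matrix.single, smul_eq_mul]
      simp only [GB1inv, ricB1, Matrix.cons_val', Matrix.cons_val_zero,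
      Matrix.cons_val_one, Matrix.head_cons, Matrix.head_fin_const, Matrix.cons_val_fin_one,
      Matrix.of_apply, Matrix.empty_val', Matrix.cons_val_two, Matrix.cons_val_three, Matrix.tail_cons]
      simp only [Fin.reduceEq, if_false, if_true, reduceIte, Fin.isValue, and_true, and_false,
        true_and, false_and, mul_one, mul_zero, add_zero, zero_add]
      field_simp
      ring
  · intro H
    have H1 := H (fun _ => 0) 1 1
    rw [ricciB1 a b c q h, scalB1 a b c q h] at H1
    simp only [ricB1, gB1, Matrix.cons_val', Matrix.cons_val_zero,
      Matrix.cons_val_one, Matrix.head_cons, Matrix.head_fin_const, Matrix.cons_val_fin_one,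
      Matrix.of_apply, Matrix.empty_val', Matrix.cons_val_two, Matrix.cons_val_three, Matrix.tail_cons] at H1
    norm_num at H1
    field_simp at H1
    have h60 : 60*(a*a)*(b*q - c^2) = 0 := by linear_combination (a*a) * H1
    have ha : (60:ℝ)*(a*a) ≠ 0 := by positivity
    have := (mul_eq_zero.mp h60).resolve_left ha
    linarith
  · intro hc x i j
    have hb : c^2 = b*q := by linarith
    rw [ricciB1 a b c q h, scalB1 a b c q h]
    fin_cases i <;> fin_cases j <;>
    · simp only [Fin.zero_eta, Fin.mk_one, Fin.reduceFinMk, Fin.isValue]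
      simp only [ricB1, gB1, Matrix.cons_val', Matrix.cons_val_zero,
      Matrix.cons_val_one, Matrix.head_cons, Matrix.head_fin_const, Matrix.cons_val_fin_one,
      Matrix.of_apply, Matrix.empty_val', Matrix.cons_val_two, Matrix.cons_val_three, Matrix.tail_cons]
      try simp only [hb]
      field_simp
      try ring
  · intro _ x
    exact scalB1 a b c q h x
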